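/- For all real parameters α, β, the coefficient functions Ā(τ,σ) = 1/6 + (α − √3/6)·P_1(σ) + α·P_1(τ) + β·P_1(τ)·P_1(σ), B̄(τ) = 1 − τ, B̂(τ) = 1, C(τ) = τ satisfy (1) the symplectic conditions: B̂(τ)(1 − C(τ)) = B̄(τ) for all τ ∈ [0,1] and B̂(τ)(B̄(σ) − Ā(τ,σ)) = B̂(σ)(B̄(τ) − Ā(σ,τ)) for all τ, σ ∈ [0,1]; and (2) the third-order condition ∫₀¹ ∫₀¹ Ā(τ,σ) dσ dτ = 1/6. -/

import Mathlib

open intervalIntegral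

/-- The `n`-th normalized shifted Legendre polynomial on `[0,1]`, via Rodrigues' formula.
For `n = 0` this formula gives the constant `1`. -/
noncomputable def legP (n : ℕ) (x : ℝ) : ℝ :=
  Real.sqrt (2 * n + 1) / n.factorial *
    iteratedDeriv n (fun t : ℝ => t ^ n * (t - 1) ^ n) x

lemma legP_one (x : ℝ) : legP 1 x = Real.sqrt 3 * (2 * x - 1) := by
  have hd : deriv (fun t : ℝ => t ^ 1 * (t - 1) ^ 1) x = 2 * x - 1 := by
    have : (fun t : ℝ => t ^ 1 * (t - 1) ^ 1) = fun t : ℝ => t * t - t := by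
      funext t; ring
    rw [this]
    have h1 : HasDerivAt (fun t : ℝ => t * t - t) (2 * x - 1) x := by
      have := ((hasDerivAt_id' x).mul (hasDerivAt_id' x)).sub (hasDerivAt_id' x)
      exact this.congr_deriv (by ring)
    exact h1.deriv
  simp [legP, iteratedDeriv_one, hd]
  ring_nf

lemma poly_integral (a b : ℝ) : (∫ x in (0:ℝ)..1, a + b * x) = a + b / 2 := by
  rw [intervalIntegral.integral_add (intervalIntegrable_const)
    ((intervalIntegral.intervalIntegrable_id).const_mul b),
    intervalIntegral.integral_const_mul, integral_id, intervalIntegral.integral_const]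
  simp [smul_eq_mul]; ring_nf

/-- The two-parameter family
`Ā(τ,σ) = 1/6 + (α − √3/6)P₁(σ) + αP₁(τ) + βP₁(τ)P₁(σ)`, `B̄(τ) = 1 − τ`, `B̂ = 1`,
`C(τ) = τ` satisfies the symplectic conditions and the third-order condition. -/
theorem order3_family_symplectic
    (α β : ℝ) (A : ℝ → ℝ → ℝ)
    (hA : ∀ τ σ : ℝ, A τ σ =
      1 / 6 + (α - Real.sqrt 3 / 6) * legP 1 σ + α * legP 1 τ + β * legP 1 τ * legP 1 σ)
    (Bbar Bhat C : ℝ → ℝ)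
    (hBbar : ∀ τ, Bbar τ = 1 - τ) (hBhat : ∀ τ, Bhat τ = 1) (hC : ∀ τ, C τ = τ) :
    ((∀ τ ∈ Set.Icc (0:ℝ) 1, Bhat τ * (1 - C τ) = Bbar τ) ∧
     (∀ τ ∈ Set.Icc (0:ℝ) 1, ∀ σ ∈ Set.Icc (0:ℝ) 1,
       Bhat τ * (Bbar σ - A τ σ) = Bhat σ * (Bbar τ - A σ τ))) ∧
    (∫ τ in (0:ℝ)..1, ∫ σ in (0:ℝ)..1, A τ σ) = 1 / 6 := by
  have hs : Real.sqrt 3 * Real.sqrt 3 = 3 := Real.mul_self_sqrt (by norm_num)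
  refine ⟨⟨fun τ _ => by rw [hBhat, hC, hBbar]; ring, fun τ _ σ _ => ?_⟩, ?_⟩
  · rw [hBhat, hBhat, hBbar, hBbar, hA, hA, legP_one, legP_one]
    linear_combination ((2 * σ - 2 * τ) / 6) * hs
  · have inner : ∀ τ : ℝ, (∫ σ in (0:ℝ)..1, A τ σ) = 1 / 6 + α * legP 1 τ := by
      intro τ
      have : (fun σ => A τ σ) = fun σ =>
          (1 / 6 + (α - Real.sqrt 3 / 6) * (-Real.sqrt 3) + α * legP 1 τ
            + β * legP 1 τ * (-Real.sqrt 3))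
          + ((α - Real.sqrt 3 / 6) * (2 * Real.sqrt 3)
            + β * legP 1 τ * (2 * Real.sqrt 3)) * σ := by
        funext σ; rw [hA, legP_one]; ring
      rw [this, poly_integral]
      ring
    have : (fun τ => ∫ σ in (0:ℝ)..1, A τ σ) = fun τ =>
        (1 / 6 + α * (-Real.sqrt 3)) + (α * (2 * Real.sqrt 3)) * τ := by
      funext τ; rw [inner, legP_one]; ring
    rw [this, poly_integral]
    ring
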